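/- Let ζ ∈ ℂ be a primitive 9th root of unity and define Q : ℤ × ℤ → ℂ by Q(m,n) = (−1)^(n²) · ζ^(3m² + 8mn). Then for S = {(1,0), (2,1), (3,2), (4,3), (1,1), (0,1)}, every Q(α) with α ∈ S is a root of unity, and the product over α ∈ S of the multiplicative order of Q(α) equals 2⁴·3⁶ = 11664. -/

import Mathlib

theorem stmt_6 (ζ : ℂ) (hζ : IsPrimitiveRoot ζ 9)
    (Q : ℤ × ℤ → ℂ) (hQ : ∀ m n : ℤ, Q (m, n) = (-1 : ℂ) ^ (n^2) * ζ ^ (3*m^2 + 8*m*n))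
    (S : Finset (ℤ × ℤ)) (hS : S = {(1,0), (2,1), (3,2), (4,3), (1,1), (0,1)}) :
    (∀ α ∈ S, IsOfFinOrder (Q α)) ∧ ∏ α ∈ S, orderOf (Q α) = 2^4 * 3^6 := by
  have h9 : orderOf ζ = 9 := hζ.eq_orderOf.symm
  have hz9 : ζ ^ (9:ℕ) = 1 := hζ.pow_eq_one
  have hneg : orderOf (-1 : ℂ) = 2 := by
    rw [orderOf_neg_one, if_neg]
    simp [ringChar.eq_zero]
  -- power reductions
  have e28 : ζ ^ (28:ℕ) = ζ := by
    rw [show (28:ℕ) = 9*3+1 by norm_num, pow_add, pow_mul, hz9, one_pow, one_mul, pow_one]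
  have e75 : ζ ^ (75:ℕ) = ζ ^ 3 := by
    rw [show (75:ℕ) = 9*8+3 by norm_num, pow_add, pow_mul, hz9, one_pow, one_mul]
  have e144 : ζ ^ (144:ℕ) = 1 := by
    rw [show (144:ℕ) = 9*16 by norm_num, pow_mul, hz9, one_pow]
  have e11 : ζ ^ (11:ℕ) = ζ ^ 2 := by
    rw [show (11:ℕ) = 9+2 by norm_num, pow_add, hz9, one_mul]
  -- values
  have hv10 : Q (1,0) = ζ^3 := by
    rw [hQ]; norm_num
  have hv21 : Q (2,1) = -ζ := by
    rw [hQ]; norm_num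
    rw [e28]
  have hv32 : Q (3,2) = ζ^3 := by
    rw [hQ]; norm_num
    rw [e75]
  have hv43 : Q (4,3) = -1 := by
    rw [hQ]; norm_num
    rw [e144]
  have hv11 : Q (1,1) = -(ζ^2) := by
    rw [hQ]; norm_num
    rw [e11]
  have hv01 : Q (0,1) = -1 := by rw [hQ]; norm_num
  -- orders
  have ho3 : orderOf (ζ^3 : ℂ) = 3 :=
    ((hζ.pow_of_dvd (by norm_num) (by norm_num)).eq_orderOf).symm
  have ho2 : orderOf (ζ^2 : ℂ) = 9 :=
    ((hζ.pow_of_coprime 2 (by norm_num)).eq_orderOf).symm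
  have hoz : orderOf (-ζ : ℂ) = 18 := by
    have := (Commute.all (-1:ℂ) ζ).orderOf_mul_eq_mul_orderOf_of_coprime
      (by rw [hneg, h9]; norm_num)
    rw [neg_one_mul, hneg, h9] at this
    rw [this]
  have hoz2 : orderOf (-(ζ^2) : ℂ) = 18 := by
    have := (Commute.all (-1:ℂ) (ζ^2)).orderOf_mul_eq_mul_orderOf_of_coprime
      (by rw [hneg, ho2]; norm_num)
    rw [neg_one_mul, hneg, ho2] at this
    rw [this]
  have fin : ∀ x : ℂ, orderOf x ≠ 0 → IsOfFinOrder x := by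
    intro x hx
    by_contra h
    exact hx (orderOf_eq_zero_iff.mpr h)
  subst hS
  constructor
  · intro α hα
    fin_cases hα
    · exact fin _ (by rw [hv10, ho3]; norm_num)
    · exact fin _ (by rw [hv21, hoz]; norm_num)
    · exact fin _ (by rw [hv32, ho3]; norm_num)
    · exact fin _ (by rw [hv43, hneg]; norm_num)
    · exact fin _ (by rw [hv11, hoz2]; norm_num)
    · exact fin _ (by rw [hv01, hneg]; norm_num)
  · rw [show ({(1,0), (2,1), (3,2), (4,3), (1,1), (0,1)} : Finset (ℤ × ℤ)) =
      insert (1,0) (insert (2,1) (insert (3,2) (insert (4,3) (insert (1,1) {(0,1)})))) from rfl,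
      Finset.prod_insert (by decide), Finset.prod_insert (by decide),
      Finset.prod_insert (by decide), Finset.prod_insert (by decide),
      Finset.prod_insert (by decide), Finset.prod_singleton,
      hv10, hv21, hv32, hv43, hv11, hv01, ho3, hoz, hneg, hoz2]
    norm_num
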